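/- In any finite simple graph G, the maximum critical independent sets coincide with the maximum crowns: an independent set is a critical independent set of maximum cardinality if and only if it is a crown of maximum cardinality. -/

import Mathlib

open Finset

variable {V : Type*}

namespace CrownPaper

variable [Fintype V] [DecidableEq V]

/-- The (open) neighborhood of a finite set of vertices. -/
def nbrs (G : SimpleGraph V) [DecidableRel G.Adj] (A : Finset V) : Finset V :=
  univ.filter (fun v => ∃ a ∈ A, G.Adj v a)

/-- The closed neighborhood `N[A] = A ∪ N(A)`. -/
def closedNbrs (G : SimpleGraph V) [DecidableRel G.Adj] (A : Finset V) : Finset V :=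
  A ∪ nbrs G A

/-- `S` is an independent set of `G`. -/
def IsIndep (G : SimpleGraph V) (S : Finset V) : Prop :=
  ∀ a ∈ S, ∀ b ∈ S, ¬ G.Adj a b

/-- The difference `d(S) = |S| - |N(S)|`. -/
def diff (G : SimpleGraph V) [DecidableRel G.Adj] (S : Finset V) : ℤ :=
  (S.card : ℤ) - ((nbrs G S).card : ℤ)

/-- `S` is a critical independent set. -/
def IsCritIndep (G : SimpleGraph V) [DecidableRel G.Adj] (S : Finset V) : Prop :=
  IsIndep G S ∧ ∀ I : Finset V, IsIndep G I → diff G I ≤ diff G S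

/-- `S` is a crown: an independent set with a matching from `N(S)` into `S`. -/
def IsCrown (G : SimpleGraph V) [DecidableRel G.Adj] (S : Finset V) : Prop :=
  IsIndep G S ∧ ∃ f : V → V, (∀ v ∈ nbrs G S, f v ∈ S ∧ G.Adj v (f v)) ∧
    Set.InjOn f (nbrs G S : Set V)

/-- `S` is a local maximum independent set: a maximum independent set of `G[N[S]]`. -/
def IsLocalMaxIndep (G : SimpleGraph V) [DecidableRel G.Adj] (S : Finset V) : Prop :=
  IsIndep G S ∧ ∀ I : Finset V, IsIndep G I → I ⊆ closedNbrs G S → I.card ≤ S.card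

/-- The independence number. -/
noncomputable def alpha (G : SimpleGraph V) : ℕ :=
  sSup {n | ∃ S : Finset V, IsIndep G S ∧ S.card = n}

/-- `M` is a matching of `G`, given as a finite set of (ordered) edges. -/
def IsMatching (G : SimpleGraph V) (M : Finset (V × V)) : Prop :=
  (∀ e ∈ M, G.Adj e.1 e.2) ∧
  ∀ e ∈ M, ∀ e' ∈ M, e ≠ e' →
    e.1 ≠ e'.1 ∧ e.1 ≠ e'.2 ∧ e.2 ≠ e'.1 ∧ e.2 ≠ e'.2

/-- The matching number. -/
noncomputable def mu (G : SimpleGraph V) : ℕ :=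
  sSup {n | ∃ M : Finset (V × V), IsMatching G M ∧ M.card = n}

/-- `G` has a perfect matching. -/
def HasPerfectMatching (G : SimpleGraph V) : Prop :=
  ∃ M : Finset (V × V), IsMatching G M ∧ ∀ v : V, ∃ e ∈ M, v = e.1 ∨ v = e.2

/-- `G` is a König–Egerváry graph: `α(G) + μ(G) = |V(G)|`. -/
def IsKonigEgervary (G : SimpleGraph V) : Prop :=
  alpha G + mu G = Fintype.card V

/-- `G` is bipartite. -/
def IsBipartite (G : SimpleGraph V) : Prop :=
  ∃ X : Set V, ∀ a b : V, G.Adj a b → (a ∈ X ↔ b ∉ X)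

end CrownPaper

open CrownPaper

namespace CrownPaper

section Aux

set_option linter.unusedSectionVars false

variable [Fintype V] [DecidableEq V] (G : SimpleGraph V) [DecidableRel G.Adj]

lemma mem_nbrs {A : Finset V} {v : V} : v ∈ nbrs G A ↔ ∃ a ∈ A, G.Adj v a := by
  simp [nbrs]

lemma nbrs_mono {A B : Finset V} (h : A ⊆ B) : nbrs G A ⊆ nbrs G B := by
  intro v hv
  rw [mem_nbrs] at hv ⊢
  obtain ⟨a, ha, hadj⟩ := hv
  exact ⟨a, h ha, hadj⟩

lemma nbrs_union {A B : Finset V} : nbrs G (A ∪ B) = nbrs G A ∪ nbrs G B := by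
  ext v
  simp only [mem_nbrs, mem_union]
  constructor
  · rintro ⟨a, ha | ha, hadj⟩
    · exact Or.inl ⟨a, ha, hadj⟩
    · exact Or.inr ⟨a, ha, hadj⟩
  · rintro (⟨a, ha, hadj⟩ | ⟨a, ha, hadj⟩)
    · exact ⟨a, Or.inl ha, hadj⟩
    · exact ⟨a, Or.inr ha, hadj⟩

lemma indep_disjoint_nbrs {S : Finset V} (h : IsIndep G S) :
    Disjoint S (nbrs G S) := by
  rw [Finset.disjoint_left]
  intro a ha hn
  rw [mem_nbrs] at hn
  obtain ⟨b, hb, hadj⟩ := hn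
  exact h a ha b hb hadj

/-- Some critical independent set exists. -/
lemma exists_critIndep : ∃ S : Finset V, IsCritIndep G S := by
  classical
  have hne : ((univ : Finset (Finset V)).filter (fun I => IsIndep G I)).Nonempty := by
    refine ⟨∅, ?_⟩
    rw [mem_filter]
    exact ⟨mem_univ _, by simp [IsIndep]⟩
  obtain ⟨S, hSmem, hSmax⟩ := Finset.exists_max_image _ (fun I => diff G I) hne
  rw [mem_filter] at hSmem
  refine ⟨S, hSmem.2, fun I hI => hSmax I ?_⟩
  rw [mem_filter]
  exact ⟨mem_univ I, hI⟩

/-- Every critical independent set is a crown (via Hall's theorem). -/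
lemma critIndep_isCrown {S : Finset V} (h : IsCritIndep G S) : IsCrown G S := by
  classical
  refine ⟨h.1, ?_⟩
  set t : ↥(nbrs G S) → Finset V := fun v => S.filter (fun x => G.Adj v.1 x) with ht
  have hall : ∀ s : Finset ↥(nbrs G S), s.card ≤ (s.biUnion t).card := by
    intro s
    set W : Finset V := s.image Subtype.val with hW
    set B : Finset V := s.biUnion t with hB
    have hWcard : W.card = s.card := Finset.card_image_of_injective _ Subtype.val_injective
    have hBS : B ⊆ S := by
      intro x hx
      rw [hB, Finset.mem_biUnion] at hx
      obtain ⟨v, _, hv⟩ := hx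
      exact (Finset.mem_filter.mp hv).1
    have hindep : IsIndep G (S \ B) := fun a ha b hb =>
      h.1 a (Finset.mem_sdiff.mp ha).1 b (Finset.mem_sdiff.mp hb).1
    have hWS : W ⊆ nbrs G S := by
      intro x hx
      rw [hW, Finset.mem_image] at hx
      obtain ⟨v, _, rfl⟩ := hx
      exact v.2
    have hN : nbrs G (S \ B) ⊆ nbrs G S := nbrs_mono G (Finset.sdiff_subset)
    have hdisj : Disjoint W (nbrs G (S \ B)) := by
      rw [Finset.disjoint_left]
      intro u huW huN
      rw [mem_nbrs] at huN
      obtain ⟨x, hx, hadj⟩ := huN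
      rw [hW, Finset.mem_image] at huW
      obtain ⟨v, hvs, rfl⟩ := huW
      have : x ∈ B := by
        rw [hB, Finset.mem_biUnion]
        exact ⟨v, hvs, Finset.mem_filter.mpr ⟨(Finset.mem_sdiff.mp hx).1, hadj⟩⟩
      exact (Finset.mem_sdiff.mp hx).2 this
    have hsub : W ∪ nbrs G (S \ B) ⊆ nbrs G S := Finset.union_subset hWS hN
    have hcard1 : W.card + (nbrs G (S \ B)).card ≤ (nbrs G S).card := by
      rw [← Finset.card_union_of_disjoint hdisj]
      exact Finset.card_le_card hsub
    have hcard2 : (S \ B).card = S.card - B.card := Finset.card_sdiff_of_subset hBS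
    have hBcard : B.card ≤ S.card := Finset.card_le_card hBS
    have hle := h.2 (S \ B) hindep
    simp only [diff] at hle
    rw [hcard2] at hle
    omega
  obtain ⟨f, hfinj, hf⟩ := (Finset.all_card_le_biUnion_card_iff_exists_injective t).mp hall
  refine ⟨fun v => if hv : v ∈ nbrs G S then f ⟨v, hv⟩ else v, ?_, ?_⟩
  · intro v hv
    simp only [dif_pos hv]
    have := hf ⟨v, hv⟩
    rw [Finset.mem_filter] at this
    exact ⟨this.1, this.2⟩
  · intro x hx y hy hxy
    simp only [Finset.mem_coe] at hx hy
    simp only [dif_pos hx, dif_pos hy] at hxy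
    exact Subtype.ext_iff.mp (hfinj hxy)

/-- A crown united with the part of a critical set outside its closed neighborhood
is again critical. -/
lemma crown_union_crit {T S : Finset V} (hT : IsCrown G T) (hS : IsCritIndep G S) :
    IsCritIndep G (T ∪ (S \ closedNbrs G T)) := by
  classical
  obtain ⟨hTi, f, hf, hfinj⟩ := hT
  set N : Finset V := nbrs G T with hNdef
  set NS : Finset V := nbrs G S with hNSdef
  set S' : Finset V := T ∪ (S \ closedNbrs G T) with hS'def
  have hTN : Disjoint T N := indep_disjoint_nbrs G hTi
  have hSNS : Disjoint S NS := indep_disjoint_nbrs G hS.1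
  -- independence of S'
  have hS'i : IsIndep G S' := by
    intro a ha b hb hadj
    rw [hS'def, Finset.mem_union] at ha hb
    rcases ha with ha | ha <;> rcases hb with hb | hb
    · exact hTi a ha b hb hadj
    · have : b ∈ N := (mem_nbrs G).mpr ⟨a, ha, hadj.symm⟩
      exact (Finset.mem_sdiff.mp hb).2 (Finset.mem_union_right _ this)
    · have : a ∈ N := (mem_nbrs G).mpr ⟨b, hb, hadj⟩
      exact (Finset.mem_sdiff.mp ha).2 (Finset.mem_union_right _ this)
    · exact hS.1 a (Finset.mem_sdiff.mp ha).1 b (Finset.mem_sdiff.mp hb).1 hadj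
  refine ⟨hS'i, fun I hI => (hS.2 I hI).trans ?_⟩
  -- cardinality computations
  have hdisjTS : Disjoint T (S \ closedNbrs G T) := by
    rw [Finset.disjoint_left]
    intro a ha hb
    exact (Finset.mem_sdiff.mp hb).2 (Finset.mem_union_left _ ha)
  have h1 : S'.card = T.card + (S \ closedNbrs G T).card :=
    Finset.card_union_of_disjoint hdisjTS
  have h2 : (S \ closedNbrs G T).card + (S ∩ closedNbrs G T).card = S.card :=
    Finset.card_sdiff_add_card_inter _ _
  -- N(S') ⊆ (NS ∪ N) \ (T ∩ NS)
  have h3 : nbrs G S' ⊆ (NS ∪ N) \ (T ∩ NS) := by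
    intro u hu
    have huNS'N : u ∈ NS ∪ N := by
      rw [mem_nbrs] at hu
      obtain ⟨a, ha, hadj⟩ := hu
      rw [hS'def, Finset.mem_union] at ha
      rcases ha with ha | ha
      · exact Finset.mem_union_right _ ((mem_nbrs G).mpr ⟨a, ha, hadj⟩)
      · exact Finset.mem_union_left _
          ((mem_nbrs G).mpr ⟨a, (Finset.mem_sdiff.mp ha).1, hadj⟩)
    rw [Finset.mem_sdiff]
    refine ⟨huNS'N, fun hmem => ?_⟩
    have huT : u ∈ S' := Finset.mem_union_left _ (Finset.mem_inter.mp hmem).1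
    rw [mem_nbrs] at hu
    obtain ⟨a, ha, hadj⟩ := hu
    exact hS'i u huT a ha hadj
  have h3' : (nbrs G S').card + (T ∩ NS).card ≤ (NS ∪ N).card := by
    have := Finset.card_le_card h3
    have hsub : T ∩ NS ⊆ NS ∪ N := fun x hx =>
      Finset.mem_union_left _ (Finset.mem_inter.mp hx).2
    rw [Finset.card_sdiff_of_subset hsub] at this
    have := Finset.card_le_card hsub
    omega
  have h4 : (NS ∪ N).card + (NS ∩ N).card = NS.card + N.card :=
    Finset.card_union_add_card_inter _ _
  -- Claim i : |S∩T| + |N \ NS| ≤ |T|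
  have claim1 : (S ∩ T).card + (N \ NS).card ≤ T.card := by
    have hdisj : Disjoint (S ∩ T) (N \ NS) := by
      rw [Finset.disjoint_left]
      intro x hx hx'
      exact (Finset.disjoint_left.mp hTN) (Finset.mem_inter.mp hx).2
        (Finset.mem_sdiff.mp hx').1
    rw [← Finset.card_union_of_disjoint hdisj]
    apply Finset.card_le_card_of_injOn (fun x => if x ∈ T then x else f x)
    · intro x hx
      rw [Finset.mem_coe, Finset.mem_union] at hx
      by_cases hxT : x ∈ T
      · simp [hxT]
      · simp only [if_neg hxT]
        rcases hx with hx | hx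
        · exact absurd (Finset.mem_inter.mp hx).2 hxT
        · exact (hf x (Finset.mem_sdiff.mp hx).1).1
    · intro x hx y hy hxy
      rw [Finset.mem_coe, Finset.mem_union] at hx hy
      have hTofN : ∀ z, z ∈ N → z ∉ T := fun z hz =>
        Finset.disjoint_right.mp hTN hz
      rcases hx with hx | hx <;> rcases hy with hy | hy
      · simpa [(Finset.mem_inter.mp hx).2, (Finset.mem_inter.mp hy).2] using hxy
      · -- x ∈ S∩T, y ∈ N \ NS
        exfalso
        have hyN := Finset.mem_sdiff.mp hy
        have hyT : y ∉ T := hTofN y hyN.1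
        simp only [if_pos (Finset.mem_inter.mp hx).2, if_neg hyT] at hxy
        -- x = f y, x ∈ S, Adj y (f y) ⇒ y ∈ NS
        have : y ∈ NS := (mem_nbrs G).mpr ⟨x, (Finset.mem_inter.mp hx).1,
          hxy ▸ (hf y hyN.1).2⟩
        exact hyN.2 this
      · exfalso
        have hxN := Finset.mem_sdiff.mp hx
        have hxT : x ∉ T := hTofN x hxN.1
        simp only [if_neg hxT, if_pos (Finset.mem_inter.mp hy).2] at hxy
        have : x ∈ NS := (mem_nbrs G).mpr ⟨y, (Finset.mem_inter.mp hy).1,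
          hxy ▸ (hf x hxN.1).2⟩
        exact hxN.2 this
      · have hxN := Finset.mem_sdiff.mp hx
        have hyN := Finset.mem_sdiff.mp hy
        simp only [if_neg (hTofN x hxN.1), if_neg (hTofN y hyN.1)] at hxy
        exact hfinj (Finset.mem_coe.mpr hxN.1) (Finset.mem_coe.mpr hyN.1) hxy
  -- Claim ii : |S ∩ N| ≤ |T ∩ NS|
  have claim2 : (S ∩ N).card ≤ (T ∩ NS).card := by
    apply Finset.card_le_card_of_injOn f
    · intro x hx
      rw [Finset.mem_coe, Finset.mem_inter] at hx
      rw [Finset.mem_coe, Finset.mem_inter]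
      refine ⟨(hf x hx.2).1, ?_⟩
      exact (mem_nbrs G).mpr ⟨x, hx.1, (hf x hx.2).2.symm⟩
    · intro x hx y hy hxy
      rw [Finset.mem_coe, Finset.mem_inter] at hx hy
      exact hfinj (Finset.mem_coe.mpr hx.2) (Finset.mem_coe.mpr hy.2) hxy
  -- |N| decomposition
  have h7 : (N \ NS).card + (N ∩ NS).card = N.card :=
    Finset.card_sdiff_add_card_inter _ _
  have h7' : (N ∩ NS).card = (NS ∩ N).card := by rw [Finset.inter_comm]
  -- |S ∩ closedNbrs T| ≤ |S∩T| + |S∩N|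
  have h8 : (S ∩ closedNbrs G T).card ≤ (S ∩ T).card + (S ∩ N).card := by
    have : S ∩ closedNbrs G T ⊆ (S ∩ T) ∪ (S ∩ N) := by
      rw [closedNbrs, Finset.inter_union_distrib_left]
    exact (Finset.card_le_card this).trans (Finset.card_union_le _ _)
  simp only [diff]
  rw [← hNSdef]
  omega

end Aux

end CrownPaper

theorem max_crit_indep_eq_max_crown (G : SimpleGraph V) [Fintype V] [DecidableEq V]
    [DecidableRel G.Adj] (S : Finset V) :
    (IsCritIndep G S ∧ ∀ T : Finset V, IsCritIndep G T → T.card ≤ S.card) ↔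
    (IsCrown G S ∧ ∀ T : Finset V, IsCrown G T → T.card ≤ S.card) := by
  constructor
  · rintro ⟨hS, hmax⟩
    refine ⟨critIndep_isCrown G hS, fun T hT => ?_⟩
    have hcrit := crown_union_crit G hT hS
    calc T.card ≤ (T ∪ (S \ closedNbrs G T)).card :=
          Finset.card_le_card Finset.subset_union_left
      _ ≤ S.card := hmax _ hcrit
  · rintro ⟨hS, hmax⟩
    obtain ⟨S₀, hS₀⟩ := exists_critIndep G
    have hcrit := crown_union_crit G hS hS₀
    have hcrown := critIndep_isCrown G hcrit
    have hle : (S ∪ (S₀ \ closedNbrs G S)).card ≤ S.card := hmax _ hcrown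
    have heq : S ∪ (S₀ \ closedNbrs G S) = S :=
      (Finset.eq_of_subset_of_card_le Finset.subset_union_left hle).symm
    rw [heq] at hcrit
    exact ⟨hcrit, fun T hT => hmax T (critIndep_isCrown G hT)⟩
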